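/- arXiv:2510.09373 — 3 statements merged into one kernel-verified Lean document; each statement's English description precedes it below -/
import Mathlib

section
/- Let s and S be duplicate-free lists with s a subsequence of S and with the same first element. Then for every element v of S, prev(v, s, S) is well defined, occurs in s, and satisfies prev(v, s, S) ⪯_S v; moreover, no element of s occurs strictly between prev(v, s, S) and v in S, i.e., there is no w occurring in s with prev(v, s, S) ≺_S w and w ≺_S v. -/
variable {V : Type*}

lemma aux_cons_case {a b x : V} {t : List V} (h : [a, b].Sublist (x :: t)) :
    [a, b].Sublist t ∨ (a = x ∧ [b].Sublist t) := by
  rcases List.cons_sublist_cons'.mp h with h' | ⟨rfl, h'⟩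
  · exact Or.inl h'
  · exact Or.inr ⟨rfl, h'⟩

lemma aux_sublist_order {a b : V} : ∀ {L t : List V}, L.Sublist t → t.Nodup →
    [a, b].Sublist t → a ∈ L → b ∈ L → [a, b].Sublist L := by
  intro L t hLt
  induction hLt with
  | slnil => intro _ _ ha _; simp at ha
  | cons x h ih =>
    intro hnd hab ha hb
    rcases aux_cons_case hab with h' | ⟨rfl, _⟩
    · exact ih hnd.of_cons h' ha hb
    · exact absurd (h.subset ha) (List.nodup_cons.mp hnd).1
  | @cons_cons L' t' x h ih =>
    intro hnd hab ha hb
    have hx : x ∉ t' := (List.nodup_cons.mp hnd).1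
    rcases aux_cons_case hab with h' | ⟨rfl, hb'⟩
    · have ha' : a ∈ L' := by
        rcases List.mem_cons.mp ha with rfl | h'' ; · exact absurd (h'.subset (by simp)) hx
        exact h''
      have hb'' : b ∈ L' := by
        rcases List.mem_cons.mp hb with rfl | h'' ; · exact absurd (h'.subset (by simp)) hx
        exact h''
      exact (ih hnd.of_cons h' ha' hb'').cons x
    · have hb'' : b ∈ L' := by
        rcases List.mem_cons.mp hb with rfl | h'' ; · exact absurd (hb'.subset (by simp)) hx
        exact h''
      exact List.cons_sublist_cons.mpr (List.singleton_sublist.mpr hb'')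

lemma aux_asymm [DecidableEq V] {a b : V} {S : List V} (hnd : S.Nodup)
    (h1 : [a, b].Sublist S) (h2 : [b, a].Sublist S) : False := by
  have hmem : a ∈ ([b, a] : List V) := by simp
  have := aux_sublist_order h2 hnd h1 hmem (by simp)
  have heq : ([a, b] : List V) = [b, a] := this.eq_of_length rfl
  have hab : a = b := by injection heq
  subst hab
  have hcount := h1.count_le a
  simp [List.count_cons] at hcount
  have := List.nodup_iff_count_le_one.mp hnd a
  omega

lemma aux_mem_takeWhile_of_prec [DecidableEq V] {w v : V} :
    ∀ {S : List V}, S.Nodup → [w, v].Sublist S → w ∈ S.takeWhile (· ≠ v) := by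
  intro S
  induction S with
  | nil => intro _ h; simp at h
  | cons x t ih =>
    intro hnd h
    have hvt : v ∈ t := by
      rcases aux_cons_case h with h' | ⟨rfl, h'⟩
      · exact h'.subset (by simp)
      · exact h'.subset (by simp)
    have hxv : x ≠ v := fun he => (List.nodup_cons.mp hnd).1 (he ▸ hvt)
    rw [List.takeWhile_cons, if_pos (by simp [hxv])]
    rcases aux_cons_case h with h' | ⟨rfl, _⟩
    · exact List.mem_cons_of_mem _ (ih hnd.of_cons h')
    · exact List.mem_cons_self

lemma aux_prec_of_mem_takeWhile [DecidableEq V] {a v : V} {S : List V}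
    (hv : v ∈ S) (ha : a ∈ S.takeWhile (· ≠ v)) : [a, v].Sublist S := by
  have hsplit := List.takeWhile_append_dropWhile (p := fun x => decide (x ≠ v)) (l := S)
  have hvd : v ∈ S.dropWhile (· ≠ v) := by
    have hnt : v ∉ S.takeWhile (· ≠ v) := fun hm => by
      have := List.mem_takeWhile_imp hm
      simp at this
    rw [← hsplit] at hv
    rcases List.mem_append.mp hv with h | h
    · exact absurd h hnt
    · exact h
  have : ([a] ++ [v]).Sublist (S.takeWhile (· ≠ v) ++ S.dropWhile (· ≠ v)) :=
    List.Sublist.append (List.singleton_sublist.mpr ha) (List.singleton_sublist.mpr hvd)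
  rwa [hsplit] at this

lemma aux_getLast_not_prec [DecidableEq V] {w : V} {L : List V} (hnd : L.Nodup) (h : L ≠ [])
    (hp : [L.getLast h, w].Sublist L) : False := by
  have hw : w ∈ L := hp.subset (by simp)
  have hL := List.dropLast_append_getLast h
  by_cases hwa : w = L.getLast h
  · rw [hwa] at hp
    have hcount := hp.count_le (L.getLast h)
    simp [List.count_cons] at hcount
    have := List.nodup_iff_count_le_one.mp hnd (L.getLast h)
    omega
  · have hwd : w ∈ L.dropLast := by
      rw [← hL] at hw
      rcases List.mem_append.mp hw with h' | h'
      · exact h'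
      · simp at h'; exact absurd h' hwa
    have h2 : ([w] ++ [L.getLast h]).Sublist (L.dropLast ++ [L.getLast h]) :=
      List.Sublist.append (List.singleton_sublist.mpr hwd) (List.Sublist.refl _)
    rw [hL] at h2
    exact aux_asymm hnd hp h2

/-- `a` precedes `b` in `S`: `[a, b]` is a sublist of `S`. -/
def prec (a b : V) (S : List V) : Prop := [a, b].Sublist S

/-- `a ⪯_S b`: `a = b` or `a ≺_S b`. -/
def preceq (a b : V) (S : List V) : Prop := a = b ∨ prec a b S

/-- The prefix of `S` strictly before `v`, filtered to elements of `s`. -/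
def prevList [DecidableEq V] (v : V) (s S : List V) : List V :=
  (S.takeWhile (· ≠ v)).filter (· ∈ s)

/-- `prev(v, s, S)`: `v` itself if `v` occurs in `s`, otherwise the last element of `s`
occurring before `v` in `S`. -/
def prev [DecidableEq V] (v : V) (s S : List V) : V :=
  if v ∈ s then v else (prevList v s S).getLastD v

theorem prev_well_defined [DecidableEq V] (s S : List V)
    (hs : s.Nodup) (hS : S.Nodup) (hsub : s.Sublist S)
    (hhead : s.head? = S.head?) :
    ∀ v ∈ S,
      (v ∉ s → prevList v s S ≠ []) ∧
      prev v s S ∈ s ∧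
      preceq (prev v s S) v S ∧
      ¬ ∃ w ∈ s, prec (prev v s S) w S ∧ prec w v S := by
  intro v hv
  by_cases hvs : v ∈ s
  · refine ⟨fun h => absurd hvs h, ?_, ?_, ?_⟩
    · simp [prev, hvs]
    · rw [prev, if_pos hvs]; exact Or.inl rfl
    · rw [prev, if_pos hvs]
      rintro ⟨w, _, h1, h2⟩
      exact aux_asymm hS h1 h2
  · -- v ∉ s
    have hSne : S ≠ [] := List.ne_nil_of_mem hv
    have hsne : s ≠ [] := by
      intro h
      rw [h] at hhead
      exact hSne (List.head?_eq_none_iff.mp hhead.symm)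
    obtain ⟨b, S', rfl⟩ := List.exists_cons_of_ne_nil hSne
    have hbs : b ∈ s := by
      have : s.head? = some b := by simpa using hhead
      exact List.mem_of_mem_head? this
    have hbv : b ≠ v := fun h => hvs (h ▸ hbs)
    have hbt : b ∈ (b :: S').takeWhile (· ≠ v) := by
      rw [List.takeWhile_cons, if_pos (by simp [hbv])]
      exact List.mem_cons_self
    have hbP : b ∈ prevList v s (b :: S') := by
      rw [prevList]
      exact List.mem_filter.mpr ⟨hbt, by simp [hbs]⟩
    have hPne : prevList v s (b :: S') ≠ [] := List.ne_nil_of_mem hbP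
    have hprev : prev v s (b :: S') = (prevList v s (b :: S')).getLast hPne := by
      rw [prev, if_neg hvs, List.getLastD_eq_getLast?, List.getLast?_eq_getLast hPne]
      rfl
    set P := prevList v s (b :: S') with hPdef
    have hprevP : prev v s (b :: S') ∈ P := hprev ▸ List.getLast_mem hPne
    have hPt : P.Sublist ((b :: S').takeWhile (· ≠ v)) := List.filter_sublist
    have hPS : P.Sublist (b :: S') := hPt.trans (List.takeWhile_sublist _)
    have hPnd : P.Nodup := hS.sublist hPS
    have hprevs : prev v s (b :: S') ∈ s := by
      have := (List.mem_filter.mp hprevP).2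
      simpa using this
    refine ⟨fun _ => hPne, hprevs, ?_, ?_⟩
    · exact Or.inr (aux_prec_of_mem_takeWhile hv (hPt.subset hprevP))
    · rintro ⟨w, hws, h1, h2⟩
      have hwt : w ∈ (b :: S').takeWhile (· ≠ v) := aux_mem_takeWhile_of_prec hS h2
      have hwP : w ∈ P := List.mem_filter.mpr ⟨hwt, by simp [hws]⟩
      have h1' : [prev v s (b :: S'), w].Sublist P :=
        aux_sublist_order hPS hS h1 hprevP hwP
      rw [hprev] at h1'
      exact aux_getLast_not_prec hPnd hPne h1'
end

section
/- Let S be a sequence (a duplicate-free list with first element α and last element ω), and let v1, v2, v3 be pairwise distinct nodes occurring in S with v2 ∉ {α, ω}. If S violates neither the NotBetween triple (α, v2, v1) nor the NotBetween triple (v3, v2, ω), then v1 ≺_S v2 and v2 ≺_S v3; that is, the two NotBetween restrictions force v2 to be visited between v1 and v3. -/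
variable {V : Type*}

/-- `S` violates the NotBetween triple `(v1, v2, v3)`. -/
def violates (S : List V) (t : V × V × V) : Prop := [t.1, t.2.1, t.2.2].Sublist S

/-- A sequence: duplicate-free list with first element `α` and last element `ω`. -/
def IsSeq (a w : V) (S : List V) : Prop :=
  S.Nodup ∧ S.head? = some a ∧ S.getLast? = some w

private lemma prec_total {S : List V} {x y : V}
    (hx : x ∈ S) (hy : y ∈ S) (hxy : x ≠ y) :
    [x, y].Sublist S ∨ [y, x].Sublist S := by
  induction S with
  | nil => simp at hx
  | cons c t ih =>
    rcases List.mem_cons.1 hx with rfl | hx'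
    · have hy' : y ∈ t := by
        rcases List.mem_cons.1 hy with rfl | h
        · exact absurd rfl hxy
        · exact h
      exact Or.inl ((List.singleton_sublist.2 hy').cons₂ x)
    · rcases List.mem_cons.1 hy with rfl | hy'
      · exact Or.inr ((List.singleton_sublist.2 hx').cons₂ y)
      · rcases ih hx' hy' with h | h
        · exact Or.inl (h.cons c)
        · exact Or.inr (h.cons c)

private lemma sublist_trans_triple {S : List V} (hS : S.Nodup) {x y z : V}
    (h1 : [x, y].Sublist S) (h2 : [y, z].Sublist S) :
    [x, y, z].Sublist S := by
  induction S with
  | nil => simp at h1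
  | cons c t ih =>
    have hc : c ∉ t := (List.nodup_cons.1 hS).1
    have ht : t.Nodup := (List.nodup_cons.1 hS).2
    cases h1 with
    | cons _ h1' =>
      have hyt : y ∈ t := (h1'.subset) (by simp)
      have h2' : [y, z].Sublist t := by
        cases h2 with
        | cons _ h => exact h
        | cons_cons _ h => exact absurd hyt (by simpa using hc)
      exact (ih ht h1' h2').cons c
    | cons_cons _ h1' =>
      have hyt : y ∈ t := List.singleton_sublist.1 h1'
      cases h2 with
      | cons _ h2' => exact h2'.cons₂ _
      | cons_cons _ h => exact absurd hyt hc
  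
private lemma head_prec {S : List V} {a v : V}
    (hh : S.head? = some a) (hv : v ∈ S) (hva : v ≠ a) :
    [a, v].Sublist S := by
  cases S with
  | nil => simp at hh
  | cons c t =>
    have : c = a := by simpa using hh
    subst this
    have hvt : v ∈ t := by
      rcases List.mem_cons.1 hv with rfl | h
      · exact absurd rfl hva
      · exact h
    exact (List.singleton_sublist.2 hvt).cons₂ _

private lemma last_prec {S : List V} {w v : V}
    (hl : S.getLast? = some w) (hv : v ∈ S) (hvw : v ≠ w) :
    [v, w].Sublist S := by
  have hh : S.reverse.head? = some w := by rwa [List.head?_reverse]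
  have := head_prec hh (by simpa using hv) hvw
  have h2 : [v, w].Sublist S.reverse.reverse := by
    simpa using this.reverse
  simpa using h2

theorem notBetween_forces_between (a w : V) (haw : a ≠ w)
    (S : List V) (hS : IsSeq a w S)
    (v1 v2 v3 : V) (h12 : v1 ≠ v2) (h13 : v1 ≠ v3) (h23 : v2 ≠ v3)
    (hv1 : v1 ∈ S) (hv2 : v2 ∈ S) (hv3 : v3 ∈ S)
    (hv2a : v2 ≠ a) (hv2w : v2 ≠ w)
    (h1 : ¬ violates S (a, v2, v1)) (h2 : ¬ violates S (v3, v2, w)) :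
    prec v1 v2 S ∧ prec v2 v3 S := by
  obtain ⟨hnd, hh, hl⟩ := hS
  constructor
  · rcases prec_total hv1 hv2 h12 with h | h
    · exact h
    · exact absurd (sublist_trans_triple hnd (head_prec hh hv2 hv2a) h) h1
  · rcases prec_total hv2 hv3 h23 with h | h
    · exact h
    · exact absurd (sublist_trans_triple hnd h (last_prec hl hv2 hv2w)) h2
end

section
/- Let d : V → V → ℝ satisfy the triangle inequality, let srv : V → ℝ be nonnegative, and let a, b : V → ℝ be time-window bounds. Let S be a duplicate-free list containing nodes vi, vj, vk with vi ≺_S vj and vj ≺_S vk, and suppose Start : V → ℝ satisfies a v ≤ Start v ≤ b v for every v occurring in S, and Start u + srv u + d u w ≤ Start w for every pair of adjacent elements u, w of S. Then a vi + srv vi + d vi vj ≤ Start vj and Start vj ≤ b vk − srv vj − d vj vk. Consequently, if a vi + srv vi + d vi vj > b vj, or b vk − srv vj − d vj vk < a vj, or a vi + srv vi + d vi vj > b vk − srv vj − d vj vk, then no such assignment Start exists, so the TransitionTimes filtering rule that forbids placing vj between vi and vk under any of these three conditions is sound. -/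
variable {V : Type*}

theorem transitionTimes_filtering_sound (d : V → V → ℝ)
    (htri : ∀ x y z : V, d x z ≤ d x y + d y z)
    (srv : V → ℝ) (hsrv : ∀ v, 0 ≤ srv v)
    (a b : V → ℝ) (S : List V) (hS : S.Nodup)
    (vi vj vk : V) (hij : prec vi vj S) (hjk : prec vj vk S)
    (Start : V → ℝ)
    (hwin : ∀ v ∈ S, a v ≤ Start v ∧ Start v ≤ b v)
    (hadj : S.Chain' (fun u w => Start u + srv u + d u w ≤ Start w)) :
    (a vi + srv vi + d vi vj ≤ Start vj ∧
      Start vj ≤ b vk - srv vj - d vj vk) ∧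
    ((a vi + srv vi + d vi vj > b vj ∨
      b vk - srv vj - d vj vk < a vj ∨
      a vi + srv vi + d vi vj > b vk - srv vj - d vj vk) → False) := by
  haveI : IsTrans V (fun u w => Start u + srv u + d u w ≤ Start w) := by
    constructor
    intro u v w huv hvw
    have h1 := htri u v w
    have h2 := hsrv v
    linarith
  have hij' : Start vi + srv vi + d vi vj ≤ Start vj := by
    have := hadj.sublist hij
    simpa [List.isChain_cons_cons] using this
  have hjk' : Start vj + srv vj + d vj vk ≤ Start vk := by
    have := hadj.sublist hjk
    simpa [List.isChain_cons_cons] using this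
  have hvi : vi ∈ S := hij.subset (by simp)
  have hvj : vj ∈ S := hij.subset (by simp)
  have hvk : vk ∈ S := hjk.subset (by simp)
  obtain ⟨hai, hbi⟩ := hwin vi hvi
  obtain ⟨haj, hbj⟩ := hwin vj hvj
  obtain ⟨hak, hbk⟩ := hwin vk hvk
  refine ⟨⟨by linarith, by linarith⟩, ?_⟩
  rintro (h | h | h) <;> linarith
end
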